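/- Let q ≥ 2, r ≥ 1, and let b(s) = q^{−1}((1 + (q−1)s)^{r+1} + (q−1)(1−s)^{r+1}). For any positive integers d and n with 1 ≤ d ≤ n and d/n ≤ (q−1)/q, the function s ↦ b(s)^{n/(r+1)} · s^{−d} on (0, ∞) attains a unique global minimum, and the minimizing value of s lies in the interval (0, 1]. Moreover, the function f(s) = s·b'(s)/((r+1)·b(s)) is strictly increasing on (0, ∞). -/

import Mathlib

open Finset Set

noncomputable def bPoly (q r : ℕ) (s : ℝ) : ℝ :=
  (1 / (q : ℝ)) * ((1 + ((q : ℝ) - 1) * s) ^ (r + 1) + ((q : ℝ) - 1) * (1 - s) ^ (r + 1))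

noncomputable def cc (q r k : ℕ) : ℝ :=
  (Nat.choose (r+1) k : ℝ) * (((q:ℝ)-1)^k + ((q:ℝ)-1)*(-1)^k) / q

lemma bPoly_eq_sum (q r : ℕ) (s : ℝ) :
    bPoly q r s = ∑ k ∈ range (r+2), cc q r k * s ^ k := by
  have h1 : (1 + ((q:ℝ)-1) * s) ^ (r+1) = (((q:ℝ)-1)*s + 1) ^ (r+1) := by ring_nf
  have h2 : (1 - s : ℝ) ^ (r+1) = (-s + 1) ^ (r+1) := by ring_nf
  rw [bPoly, h1, h2, add_pow, add_pow, Finset.mul_sum, ← Finset.sum_add_distrib,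
    Finset.mul_sum]
  apply Finset.sum_congr rfl
  intro k hk
  rw [cc, mul_pow, neg_pow]
  ring

lemma cc_nonneg {q : ℕ} (r k : ℕ) (hq : 2 ≤ q) : 0 ≤ cc q r k := by
  have hq1 : (1:ℝ) ≤ (q:ℝ) - 1 := by
    have : (2:ℝ) ≤ q := by exact_mod_cast hq
    linarith
  have hqpos : (0:ℝ) < q := by positivity
  apply div_nonneg _ hqpos.le
  apply mul_nonneg (by positivity)
  rcases Nat.even_or_odd k with he | ho
  · rw [he.neg_one_pow]
    have : (0:ℝ) ≤ ((q:ℝ)-1)^k := by positivity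
    nlinarith
  · rw [ho.neg_one_pow]
    rcases Nat.eq_zero_or_pos k with rfl | hk
    · simp at ho
    · have : ((q:ℝ)-1)^1 ≤ ((q:ℝ)-1)^k := pow_le_pow_right₀ (by linarith) hk
      simp at this ⊢
      linarith

lemma cc_zero {q : ℕ} (r : ℕ) (hq : 2 ≤ q) : cc q r 0 = 1 := by
  have : (q:ℝ) ≠ 0 := by positivity
  simp [cc]
  omega

lemma cc_two_pos {q r : ℕ} (hq : 2 ≤ q) (hr : 1 ≤ r) : 0 < cc q r 2 := by
  have hq1 : (1:ℝ) ≤ (q:ℝ) - 1 := by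
    have : (2:ℝ) ≤ q := by exact_mod_cast hq
    linarith
  have hqpos : (0:ℝ) < q := by positivity
  apply div_pos _ hqpos
  apply mul_pos
  · have : 1 ≤ (r+1).choose 2 := Nat.one_le_iff_ne_zero.mpr (by
      have : 2 ≤ r + 1 := by omega
      simp [Nat.choose_eq_zero_iff]; omega)
    exact_mod_cast Nat.lt_of_lt_of_le Nat.zero_lt_one this
  · simp only [pow_two]
    nlinarith

lemma hasDerivAt_sumForm (q r : ℕ) (s : ℝ) :
    HasDerivAt (fun x : ℝ => ∑ k ∈ range (r+2), cc q r k * x ^ k)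
      (∑ k ∈ range (r+2), cc q r k * ((k:ℝ) * s ^ (k-1))) s := by
  apply HasDerivAt.fun_sum
  intro k _
  exact (hasDerivAt_pow k s).const_mul (cc q r k)

lemma hasDerivAt_bPoly_sum (q r : ℕ) (s : ℝ) :
    HasDerivAt (bPoly q r) (∑ k ∈ range (r+2), cc q r k * ((k:ℝ) * s ^ (k-1))) s := by
  have : bPoly q r = fun x : ℝ => ∑ k ∈ range (r+2), cc q r k * x ^ k :=
    funext fun x => bPoly_eq_sum q r x
  rw [this]; exact hasDerivAt_sumForm q r s

lemma deriv_bPoly (q r : ℕ) (s : ℝ) :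
    deriv (bPoly q r) s = ∑ k ∈ range (r+2), cc q r k * ((k:ℝ) * s ^ (k-1)) :=
  (hasDerivAt_bPoly_sum q r s).deriv

noncomputable def S0 (q r : ℕ) (s : ℝ) : ℝ := ∑ k ∈ range (r+2), cc q r k * s ^ k
noncomputable def S1 (q r : ℕ) (s : ℝ) : ℝ := ∑ k ∈ range (r+2), cc q r k * ((k:ℝ) * s ^ k)

lemma mul_deriv_eq_S1 (q r : ℕ) (s : ℝ) : s * deriv (bPoly q r) s = S1 q r s := by
  rw [deriv_bPoly, S1, Finset.mul_sum]
  apply Finset.sum_congr rfl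
  intro k _
  rcases Nat.eq_zero_or_pos k with rfl | hk
  · simp
  · have : s ^ k = s * s ^ (k-1) := by
      conv_lhs => rw [← Nat.succ_pred_eq_of_pos hk]
      rw [pow_succ, Nat.pred_eq_sub_one]; ring
    rw [this]; ring

lemma S0_ge_one {q : ℕ} (r : ℕ) (hq : 2 ≤ q) {s : ℝ} (hs : 0 ≤ s) : 1 ≤ S0 q r s := by
  have h0 : cc q r 0 * s ^ 0 = 1 := by simp [cc_zero r hq]
  rw [S0]
  calc (1:ℝ) = cc q r 0 * s ^ 0 := h0.symm
    _ ≤ ∑ k ∈ range (r+2), cc q r k * s ^ k := by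
        apply Finset.single_le_sum (f := fun k => cc q r k * s ^ k)
        · intro k _
          exact mul_nonneg (cc_nonneg r k hq) (by positivity)
        · simp

lemma bPoly_eq_S0 (q r : ℕ) (s : ℝ) : bPoly q r s = S0 q r s := bPoly_eq_sum q r s

lemma pow_cross {s t : ℝ} (hs : 0 < s) (hst : s ≤ t) {j k : ℕ} (hjk : j ≤ k) :
    s ^ k * t ^ j ≤ t ^ k * s ^ j := by
  obtain ⟨m, rfl⟩ := Nat.exists_eq_add_of_le hjk
  have ht : 0 < t := lt_of_lt_of_le hs hst
  have h1 : s ^ m ≤ t ^ m := pow_le_pow_left₀ hs.le hst m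
  calc s ^ (j+m) * t ^ j = (s^j * t^j) * s^m := by ring
    _ ≤ (s^j * t^j) * t^m := by
        apply mul_le_mul_of_nonneg_left h1 (by positivity)
    _ = t ^ (j+m) * s ^ j := by ring

lemma key_ineq {q r : ℕ} (hq : 2 ≤ q) (hr : 1 ≤ r) {s t : ℝ}
    (hs : 0 < s) (hst : s < t) : S1 q r s * S0 q r t < S1 q r t * S0 q r s := by
  set N := r + 2 with hN
  have hD : S1 q r t * S0 q r s - S1 q r s * S0 q r t =
      ∑ k ∈ range N, ∑ j ∈ range N,
        (k:ℝ) * cc q r k * cc q r j * (t^k * s^j - s^k * t^j) := by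
    rw [S1, S0, S1, S0, Finset.sum_mul_sum, Finset.sum_mul_sum, ← Finset.sum_sub_distrib]
    apply Finset.sum_congr rfl; intro k _
    rw [← Finset.sum_sub_distrib]
    apply Finset.sum_congr rfl; intro j _
    ring
  have hswap : ∑ k ∈ range N, ∑ j ∈ range N,
        (k:ℝ) * cc q r k * cc q r j * (t^k * s^j - s^k * t^j)
      = ∑ k ∈ range N, ∑ j ∈ range N,
        (j:ℝ) * cc q r j * cc q r k * (t^j * s^k - s^j * t^k) := Finset.sum_comm
  have hHnn : ∀ k j : ℕ, 0 ≤ ((k:ℝ) - (j:ℝ)) * cc q r k * cc q r j * (t^k * s^j - s^k * t^j) := by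
    intro k j
    have c1 := cc_nonneg (q := q) r k hq
    have c2 := cc_nonneg (q := q) r j hq
    rcases le_or_gt j k with h | h
    · have h1 : (0:ℝ) ≤ (k:ℝ) - j := by
        have : (j:ℝ) ≤ k := by exact_mod_cast h
        linarith
      have h2 : s^k * t^j ≤ t^k * s^j := pow_cross hs hst.le h
      have h3 : (0:ℝ) ≤ t^k * s^j - s^k * t^j := by linarith
      positivity
    · have h1 : (k:ℝ) - j ≤ 0 := by
        have : (k:ℝ) ≤ j := by exact_mod_cast h.le
        linarith
      have h2 : t^k * s^j ≤ s^k * t^j := by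
        have := pow_cross hs hst.le h.le
        linarith [pow_cross hs hst.le h.le]
      nlinarith [mul_nonneg (mul_nonneg (neg_nonneg.2 h1) c1)
        (mul_nonneg c2 (by linarith : (0:ℝ) ≤ s^k * t^j - t^k * s^j))]
  have hsum_pos : 0 < ∑ k ∈ range N, ∑ j ∈ range N,
      ((k:ℝ) - (j:ℝ)) * cc q r k * cc q r j * (t^k * s^j - s^k * t^j) := by
    rw [← Finset.sum_product']
    have h0 : (0:ℝ) = ∑ _p ∈ (range N) ×ˢ (range N), (0:ℝ) := by simp
    rw [h0]
    apply Finset.sum_lt_sum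
    · intro p _
      exact hHnn p.1 p.2
    · refine ⟨(2, 0), ?_, ?_⟩
      · simp [Finset.mem_product]; omega
      · have hc2 := cc_two_pos hq hr
        have hc0 := cc_zero (q := q) r hq
        simp only
        rw [hc0]
        have ht2 : s^2 < t^2 := by nlinarith
        norm_num
        nlinarith
  have h2D : 2 * (S1 q r t * S0 q r s - S1 q r s * S0 q r t) =
      ∑ k ∈ range N, ∑ j ∈ range N,
        ((k:ℝ) - (j:ℝ)) * cc q r k * cc q r j * (t^k * s^j - s^k * t^j) := by
    rw [two_mul, hD]
    nth_rewrite 2 [hswap]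
    rw [← Finset.sum_add_distrib]
    apply Finset.sum_congr rfl; intro k _
    rw [← Finset.sum_add_distrib]
    apply Finset.sum_congr rfl; intro j _
    ring
  linarith [h2D ▸ hsum_pos]

lemma hasDerivAt_bPoly (q r : ℕ) (s : ℝ) :
    HasDerivAt (bPoly q r)
      ((1/(q:ℝ)) * ((((r:ℝ)+1) * (1+((q:ℝ)-1)*s)^r * ((q:ℝ)-1)) +
        ((q:ℝ)-1) * (((r:ℝ)+1) * (1-s)^r * (-1)))) s := by
  have h1 : HasDerivAt (fun x : ℝ => 1 + ((q:ℝ)-1)*x) ((q:ℝ)-1) s := by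
    simpa using ((hasDerivAt_id s).const_mul ((q:ℝ)-1)).const_add 1
  have h2 : HasDerivAt (fun x : ℝ => 1 - x) (-1 : ℝ) s := by
    simpa using (hasDerivAt_id s).const_sub 1
  have h := ((h1.pow (r+1)).add ((h2.pow (r+1)).const_mul ((q:ℝ)-1))).const_mul (1/(q:ℝ))
  have hb : bPoly q r = fun x : ℝ =>
      (1/(q:ℝ)) * ((1 + ((q:ℝ)-1)*x)^(r+1) + ((q:ℝ)-1)*(1-x)^(r+1)) := rfl
  rw [hb]
  refine h.congr_deriv ?_
  push_cast
  simp [Nat.add_sub_cancel]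

lemma deriv_bPoly_one {q r : ℕ} (hr : 1 ≤ r) :
    deriv (bPoly q r) 1 = ((r:ℝ)+1) * ((q:ℝ)-1) * (q:ℝ)^r / q := by
  rw [(hasDerivAt_bPoly q r 1).deriv]
  have h0 : (1 - (1:ℝ)) ^ r = 0 := by
    rw [sub_self, zero_pow (by omega)]
  have h1 : (1 + ((q:ℝ)-1)*1) = (q:ℝ) := by ring
  rw [h1, h0]
  ring

lemma S0_one {q : ℕ} (r : ℕ) (hq : 2 ≤ q) : S0 q r 1 = (q:ℝ)^r := by
  have hq0 : (q:ℝ) ≠ 0 := by positivity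
  rw [← bPoly_eq_S0, bPoly]
  have h1 : (1 + ((q:ℝ)-1)*1) = (q:ℝ) := by ring
  rw [h1, sub_self, zero_pow (by omega), mul_zero, add_zero, pow_succ]
  field_simp

lemma S1_zero (q r : ℕ) : S1 q r 0 = 0 := by
  rw [S1]
  apply Finset.sum_eq_zero
  intro k _
  rcases Nat.eq_zero_or_pos k with rfl | hk
  · simp
  · rw [zero_pow (by omega)]; ring

lemma S1_one {q r : ℕ} (hq : 2 ≤ q) (hr : 1 ≤ r) :
    S1 q r 1 = ((r:ℝ)+1) * ((q:ℝ)-1) * (q:ℝ)^r / q := by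
  rw [← mul_deriv_eq_S1, deriv_bPoly_one hr, one_mul]

noncomputable def fQ (q r : ℕ) (s : ℝ) : ℝ := S1 q r s / (((r:ℝ)+1) * S0 q r s)

lemma fQ_zero (q r : ℕ) : fQ q r 0 = 0 := by simp [fQ, S1_zero]

lemma fQ_one {q r : ℕ} (hq : 2 ≤ q) (hr : 1 ≤ r) : fQ q r 1 = ((q:ℝ)-1)/q := by
  have hq0 : (q:ℝ) ≠ 0 := by positivity
  have hqr : (q:ℝ)^r ≠ 0 := by positivity
  have hr1 : ((r:ℝ)+1) ≠ 0 := by positivity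
  rw [fQ, S1_one hq hr, S0_one r hq]
  field_simp

lemma continuous_S0 (q r : ℕ) : Continuous (S0 q r) := by
  apply continuous_finset_sum
  intro k _
  exact continuous_const.mul (continuous_pow k)

lemma continuous_S1 (q r : ℕ) : Continuous (S1 q r) := by
  apply continuous_finset_sum
  intro k _
  exact continuous_const.mul (continuous_const.mul (continuous_pow k))

theorem unique_minimum_gv_function (q r d n : ℕ)
    (hq : 2 ≤ q) (hr : 1 ≤ r) (hd : 1 ≤ d) (hdn : d ≤ n)
    (hδ : (d : ℝ) / n ≤ ((q : ℝ) - 1) / q) :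
    (∃ s₀ : ℝ, s₀ ∈ Set.Ioc (0 : ℝ) 1 ∧
      (∀ s ∈ Set.Ioi (0 : ℝ),
        bPoly q r s₀ ^ ((n : ℝ) / ((r : ℝ) + 1)) * s₀ ^ (-(d : ℝ)) ≤
          bPoly q r s ^ ((n : ℝ) / ((r : ℝ) + 1)) * s ^ (-(d : ℝ))) ∧
      (∀ s ∈ Set.Ioi (0 : ℝ),
        (∀ u ∈ Set.Ioi (0 : ℝ),
          bPoly q r s ^ ((n : ℝ) / ((r : ℝ) + 1)) * s ^ (-(d : ℝ)) ≤
            bPoly q r u ^ ((n : ℝ) / ((r : ℝ) + 1)) * u ^ (-(d : ℝ))) → s = s₀)) ∧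
    StrictMonoOn (fun s : ℝ => s * deriv (bPoly q r) s / (((r : ℝ) + 1) * bPoly q r s))
      (Set.Ioi (0 : ℝ)) := by
  have hn : 1 ≤ n := le_trans hd hdn
  have hnR : (0:ℝ) < n := by exact_mod_cast hn
  have hdR : (0:ℝ) < d := by exact_mod_cast hd
  have hr1 : (0:ℝ) < (r:ℝ)+1 := by positivity
  have hbpos : ∀ s : ℝ, 0 ≤ s → 0 < bPoly q r s := fun s hs => by
    rw [bPoly_eq_S0]; linarith [S0_ge_one r hq hs]
  have hfmono : StrictMonoOn (fQ q r) (Ioi (0:ℝ)) := by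
    intro a ha b hb hab
    simp only [Set.mem_Ioi] at ha hb
    have hS0a : 0 < S0 q r a := by linarith [S0_ge_one r hq ha.le]
    have hS0b : 0 < S0 q r b := by linarith [S0_ge_one r hq hb.le]
    rw [fQ, fQ, div_lt_div_iff₀ (by positivity) (by positivity)]
    nlinarith [key_ineq hq hr ha hab]
  have hfeq : (fun s : ℝ => s * deriv (bPoly q r) s / (((r:ℝ)+1) * bPoly q r s)) = fQ q r := by
    funext s
    rw [mul_deriv_eq_S1, bPoly_eq_S0]
    rfl
  have hcont : ContinuousOn (fQ q r) (Icc (0:ℝ) 1) := by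
    apply ContinuousOn.div (continuous_S1 q r).continuousOn
      (continuous_const.mul (continuous_S0 q r)).continuousOn
    intro x hx
    have := S0_ge_one r hq hx.1
    have : 0 < ((r:ℝ)+1) * S0 q r x := by nlinarith
    exact this.ne'
  have hmem : (d:ℝ)/n ∈ Ioc (fQ q r 0) (fQ q r 1) := by
    rw [fQ_zero, fQ_one hq hr]
    exact ⟨div_pos hdR hnR, hδ⟩
  obtain ⟨s₀, hs₀mem, hfs₀⟩ := intermediate_value_Ioc zero_le_one hcont hmem
  have hs₀pos : 0 < s₀ := hs₀mem.1
  set L : ℝ → ℝ := fun s => Real.log (bPoly q r s) * ((n:ℝ)/((r:ℝ)+1)) - Real.log s * (d:ℝ)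
    with hLdef
  have hLderiv : ∀ s : ℝ, 0 < s →
      HasDerivAt L (((n:ℝ)/s) * (fQ q r s - (d:ℝ)/(n:ℝ))) s := by
    intro s hs
    have hb := hasDerivAt_bPoly q r s
    have hbp := hbpos s hs.le
    have h1 := (hb.log hbp.ne').mul_const ((n:ℝ)/((r:ℝ)+1))
    have h2 := (Real.hasDerivAt_log hs.ne').mul_const (d:ℝ)
    have h := h1.sub h2
    refine h.congr_deriv ?_
    rw [show fQ q r s = S1 q r s / (((r:ℝ)+1) * S0 q r s) from rfl,
      ← mul_deriv_eq_S1, hb.deriv, ← bPoly_eq_S0]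
    have hs' : s ≠ 0 := hs.ne'
    have hb' : bPoly q r s ≠ 0 := hbp.ne'
    have hn' : (n:ℝ) ≠ 0 := hnR.ne'
    have hr' : ((r:ℝ)+1) ≠ 0 := hr1.ne'
    field_simp
  have hmonoL : StrictMonoOn L (Ici s₀) := by
    apply strictMonoOn_of_deriv_pos (convex_Ici s₀)
    · intro x hx
      have hxpos : 0 < x := lt_of_lt_of_le hs₀pos hx
      exact ((hLderiv x hxpos).differentiableAt.continuousAt).continuousWithinAt
    · intro x hx
      rw [interior_Ici] at hx
      have hxpos : 0 < x := lt_trans hs₀pos hx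
      rw [(hLderiv x hxpos).deriv]
      have hlt : fQ q r s₀ < fQ q r x :=
        hfmono (Set.mem_Ioi.mpr hs₀pos) (Set.mem_Ioi.mpr hxpos) hx
      rw [hfs₀] at hlt
      apply mul_pos (div_pos hnR hxpos)
      linarith
  have hantiL : StrictAntiOn L (Ioc 0 s₀) := by
    apply strictAntiOn_of_deriv_neg (convex_Ioc 0 s₀)
    · intro x hx
      exact ((hLderiv x hx.1).differentiableAt.continuousAt).continuousWithinAt
    · intro x hx
      rw [interior_Ioc] at hx
      rw [(hLderiv x hx.1).deriv]
      have hlt : fQ q r x < fQ q r s₀ :=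
        hfmono (Set.mem_Ioi.mpr hx.1) (Set.mem_Ioi.mpr hs₀pos) hx.2
      rw [hfs₀] at hlt
      apply mul_neg_of_pos_of_neg (div_pos hnR hx.1)
      linarith
  have hG : ∀ s : ℝ, 0 < s →
      bPoly q r s ^ ((n:ℝ)/((r:ℝ)+1)) * s ^ (-(d:ℝ)) = Real.exp (L s) := by
    intro s hs
    rw [Real.rpow_def_of_pos (hbpos s hs.le), Real.rpow_def_of_pos hs, ← Real.exp_add]
    congr 1
    rw [hLdef]
    ring
  have hstrict : ∀ s ∈ Ioi (0:ℝ), s ≠ s₀ → L s₀ < L s := by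
    intro s hs hne
    rcases lt_or_gt_of_ne hne with h | h
    · exact hantiL ⟨hs, h.le⟩ ⟨hs₀pos, le_refl s₀⟩ h
    · exact hmonoL (self_mem_Ici) (mem_Ici.mpr h.le) h
  refine ⟨⟨s₀, hs₀mem, ?_, ?_⟩, hfeq ▸ hfmono⟩
  · intro s hs
    rw [hG s hs, hG s₀ hs₀pos, Real.exp_le_exp]
    rcases eq_or_ne s s₀ with rfl | hne
    · exact le_refl _
    · exact (hstrict s hs hne).le
  · intro s hs hmin
    by_contra hne
    have h1 := hmin s₀ (Set.mem_Ioi.mpr hs₀pos)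
    rw [hG s hs, hG s₀ hs₀pos, Real.exp_le_exp] at h1
    exact absurd h1 (not_le.mpr (hstrict s hs hne))
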